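/- Let X be a T1 space and f, g be nonzero zero divisors in C(X)_F with Z(f) ∩ Z(g) = ∅. Then there exist distinct nonzero h₁, h₂ ∈ C(X)_F such that f·h₁ = 0, h₁·h₂ = 0, and h₂·g = 0. -/

import Mathlib

open SimpleGraph

/-- `f` belongs to `C(X)_F` : it is continuous outside some finite set. -/
def CF (X : Type*) [TopologicalSpace X] (f : X → ℝ) : Prop :=
  ∃ F : Set X, F.Finite ∧ ContinuousOn f Fᶜ

/-- `f` is a nonzero zero divisor of the ring `C(X)_F`. -/
def ZD (X : Type*) [TopologicalSpace X] (f : X → ℝ) : Prop :=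
  CF X f ∧ f ≠ 0 ∧ ∃ g : X → ℝ, CF X g ∧ g ≠ 0 ∧ f * g = 0

/-- The vertex set of the zero divisor graph of `C(X)_F`. -/
def Vtx (X : Type*) [TopologicalSpace X] := {f : X → ℝ // ZD X f}

/-- The zero divisor graph `Γ(C(X)_F)`: vertices are the nonzero zero divisors,
`f` and `g` adjacent iff `f ≠ g` and `f * g = 0`. -/
def Γ (X : Type*) [TopologicalSpace X] : SimpleGraph (Vtx X) where
  Adj f g := f ≠ g ∧ (f.1 * g.1 = 0)
  symm := ⟨fun f g ⟨h1, h2⟩ => ⟨h1.symm, by rw [mul_comm] at h2; exact h2⟩⟩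
  loopless := ⟨fun f ⟨h, _⟩ => h rfl⟩

/-- The zero set of a function. -/
def Z {X : Type*} (f : X → ℝ) : Set X := {x | f x = 0}

/-- The characteristic function of a point. -/
noncomputable def chi {X : Type*} (x : X) : X → ℝ := Set.indicator {x} (fun _ => 1)

/-- For nonzero zero divisors `f, g` of `C(X)_F` with disjoint zero sets, there exist
distinct nonzero `h₁, h₂ ∈ C(X)_F` with `f * h₁ = 0`, `h₁ * h₂ = 0` and `h₂ * g = 0`. -/

lemma chi_ne0 {X : Type*} {x y : X} (h : y ≠ x) : chi x y = 0 := by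
  simp [chi, Set.indicator_apply, h]

lemma chi_CF {X : Type*} [TopologicalSpace X] (x : X) : CF X (chi x) := by
  refine ⟨{x}, Set.finite_singleton x, ?_⟩
  apply continuousOn_const.congr (f := fun _ => (0:ℝ))
  intro y hy
  exact chi_ne0 (Set.mem_compl_singleton_iff.mp hy)

lemma chi_self {X : Type*} (x : X) : chi x x = 1 := by simp [chi]

lemma zd_zero_pt {X : Type*} [TopologicalSpace X] {f : X → ℝ} (hf : ZD X f) :
    ∃ x, f x = 0 := by
  obtain ⟨_, _, g, _, hg0, hfg⟩ := hf
  obtain ⟨x, hx⟩ := Function.ne_iff.mp hg0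
  refine ⟨x, ?_⟩
  have := congrFun hfg x
  simp only [Pi.mul_apply, Pi.zero_apply] at this hx
  exact (mul_eq_zero.mp this).resolve_right hx

theorem stmt9 {X : Type*} [TopologicalSpace X] [T1Space X]
    (f g : X → ℝ) (hf : ZD X f) (hg : ZD X g) (hdisj : Z f ∩ Z g = ∅) :
    ∃ h₁ h₂ : X → ℝ, CF X h₁ ∧ CF X h₂ ∧ h₁ ≠ 0 ∧ h₂ ≠ 0 ∧ h₁ ≠ h₂ ∧
      f * h₁ = 0 ∧ h₁ * h₂ = 0 ∧ h₂ * g = 0 := by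
  obtain ⟨a, ha⟩ := zd_zero_pt hf
  obtain ⟨b, hb⟩ := zd_zero_pt hg
  have hab : a ≠ b := by
    rintro rfl
    exact Set.eq_empty_iff_forall_notMem.mp hdisj a ⟨ha, hb⟩
  refine ⟨chi a, chi b, chi_CF a, chi_CF b, ?_, ?_, ?_, ?_, ?_, ?_⟩
  · intro h; have := congrFun h a; simp [chi_self] at this
  · intro h; have := congrFun h b; simp [chi_self] at this
  · intro h; have := congrFun h a; rw [chi_self, chi_ne0 hab] at this; norm_num at this
  · funext x; by_cases hx : x = a
    · subst hx; simp [chi_self, ha]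
    · simp [chi_ne0 hx]
  · funext x; by_cases hx : x = a
    · subst hx; simp [chi_ne0 hab]
    · simp [chi_ne0 hx]
  · funext x; by_cases hx : x = b
    · subst hx; simp [chi_self, hb]
    · simp [chi_ne0 hx]
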